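/- Let E be a Banach space and let I_1, I_2, I_3, J_1, J_2 be operator ideals such that J_2 ⊆ J_1, I_1 ⊆ I_3, and every operator in I_1(F;G) can be written as R ∘ S with S ∈ L_{J_2}(F;H) and R ∈ I_1(H;G) for some Banach space H (i.e., I_1 ⊆ I_1 ∘ L_{J_2}). Consider the conditions: (a) id_E belongs to the τ_{C_{J_1}}-closure of I_2(E;E); (b) E has the (I_1, I_2, ‖·‖)-AP; (c) E has the (I_1, I_2, τ_{C_{J_2}})-AP; (d) E has the (I_3, I_2, τ_{C_{J_2}})-AP; (e) E has the (L, I_2, τ_{C_{J_2}})-AP, where L is the ideal of all bounded operators. Then (a) ⟹ (e) ⟹ (d) ⟹ (c) ⟺ (b). -/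

import Mathlib

open Filter Topology Metric Set Pointwise

universe u

variable (𝕜 : Type u) [RCLike 𝕜]

/-- An assignment, to each pair of Banach spaces over `𝕜`, of a set of bounded linear
operators between them. -/
abbrev BanachOpClass (𝕜 : Type u) [RCLike 𝕜] : Type (u + 1) :=
  ∀ (E F : Type u) [NormedAddCommGroup E] [NormedSpace 𝕜 E] [CompleteSpace E]
    [NormedAddCommGroup F] [NormedSpace 𝕜 F] [CompleteSpace F], Set (E →L[𝕜] F)

/-- A bounded linear operator has finite rank if its range is finite dimensional. -/
def IsFiniteRankOp {E F : Type u} [NormedAddCommGroup E] [NormedSpace 𝕜 E]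
    [NormedAddCommGroup F] [NormedSpace 𝕜 F] (u : E →L[𝕜] F) : Prop :=
  FiniteDimensional 𝕜 (LinearMap.range (u : E →ₗ[𝕜] F))

/-- Operator ideals in the sense of Pietsch. -/
structure IsOperatorIdeal (C : BanachOpClass 𝕜) : Prop where
  smul_mem : ∀ (E F : Type u) [NormedAddCommGroup E] [NormedSpace 𝕜 E] [CompleteSpace E]
    [NormedAddCommGroup F] [NormedSpace 𝕜 F] [CompleteSpace F]
    (a : 𝕜) (u : E →L[𝕜] F), u ∈ C E F → a • u ∈ C E F
  add_mem : ∀ (E F : Type u) [NormedAddCommGroup E] [NormedSpace 𝕜 E] [CompleteSpace E]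
    [NormedAddCommGroup F] [NormedSpace 𝕜 F] [CompleteSpace F]
    (u v : E →L[𝕜] F), u ∈ C E F → v ∈ C E F → u + v ∈ C E F
  finiteRank_mem : ∀ (E F : Type u) [NormedAddCommGroup E] [NormedSpace 𝕜 E] [CompleteSpace E]
    [NormedAddCommGroup F] [NormedSpace 𝕜 F] [CompleteSpace F]
    (u : E →L[𝕜] F), IsFiniteRankOp 𝕜 u → u ∈ C E F
  comp_mem : ∀ (E F G H : Type u)
    [NormedAddCommGroup E] [NormedSpace 𝕜 E] [CompleteSpace E]
    [NormedAddCommGroup F] [NormedSpace 𝕜 F] [CompleteSpace F]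
    [NormedAddCommGroup G] [NormedSpace 𝕜 G] [CompleteSpace G]
    [NormedAddCommGroup H] [NormedSpace 𝕜 H] [CompleteSpace H]
    (u : E →L[𝕜] F) (v : F →L[𝕜] G) (w : G →L[𝕜] H),
    v ∈ C F G → w.comp (v.comp u) ∈ C E H

/-- An assignment of a topology to each space of bounded operators between Banach spaces. -/
abbrev OpTopologyAssignment (𝕜 : Type u) [RCLike 𝕜] : Type (u + 1) :=
  ∀ (E F : Type u) [NormedAddCommGroup E] [NormedSpace 𝕜 E] [CompleteSpace E]
    [NormedAddCommGroup F] [NormedSpace 𝕜 F] [CompleteSpace F],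
    TopologicalSpace (E →L[𝕜] F)

/-- The closure of an operator class with respect to an assignment of topologies. -/
def closureClass (τ : OpTopologyAssignment 𝕜) (C : BanachOpClass 𝕜) (E F : Type u)
    [NormedAddCommGroup E] [NormedSpace 𝕜 E] [CompleteSpace E]
    [NormedAddCommGroup F] [NormedSpace 𝕜 F] [CompleteSpace F] : Set (E →L[𝕜] F) :=
  @closure _ (τ E F) (C E F)

/-- An ideal topology: a linear topology on each operator space such that the closure of
any operator ideal is again an operator ideal. -/
structure IsIdealTopology (τ : OpTopologyAssignment 𝕜) : Prop where
  topologicalAddGroup : ∀ (E F : Type u)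
    [NormedAddCommGroup E] [NormedSpace 𝕜 E] [CompleteSpace E]
    [NormedAddCommGroup F] [NormedSpace 𝕜 F] [CompleteSpace F],
    @IsTopologicalAddGroup (E →L[𝕜] F) (τ E F) _
  continuousSMul : ∀ (E F : Type u)
    [NormedAddCommGroup E] [NormedSpace 𝕜 E] [CompleteSpace E]
    [NormedAddCommGroup F] [NormedSpace 𝕜 F] [CompleteSpace F],
    @ContinuousSMul 𝕜 (E →L[𝕜] F) _ _ (τ E F)
  closure_isOperatorIdeal : ∀ C : BanachOpClass 𝕜,
    IsOperatorIdeal 𝕜 C → IsOperatorIdeal 𝕜 (closureClass 𝕜 τ C)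

/-- A Banach space `E` has the `(I, J, τ)`-approximation property if `I(F;E)` is contained in
the `τ`-closure of `J(F;E)` for every Banach space `F`. -/
def HasAP (I J : BanachOpClass 𝕜) (τ : OpTopologyAssignment 𝕜)
    (E : Type u) [NormedAddCommGroup E] [NormedSpace 𝕜 E] [CompleteSpace E] : Prop :=
  ∀ (F : Type u) [NormedAddCommGroup F] [NormedSpace 𝕜 F] [CompleteSpace F],
    I F E ⊆ @closure _ (τ F E) (J F E)

/-- A Banach space `E` has the `(I, J, τ)`-weak approximation property if `I(E;E)` is contained
in the `τ`-closure of `J(E;E)`. -/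
def HasWAP (I J : BanachOpClass 𝕜) (τ : OpTopologyAssignment 𝕜)
    (E : Type u) [NormedAddCommGroup E] [NormedSpace 𝕜 E] [CompleteSpace E] : Prop :=
  I E E ⊆ @closure _ (τ E E) (J E E)

/-- The topology on `E →L[𝕜] F` of uniform convergence on the sets of the family `𝔖`. -/
def uniformOnTop (E F : Type u) [NormedAddCommGroup E] [NormedSpace 𝕜 E] [CompleteSpace E]
    [NormedAddCommGroup F] [NormedSpace 𝕜 F] [CompleteSpace F] (𝔖 : Set (Set E)) :
    TopologicalSpace (E →L[𝕜] F) :=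
  TopologicalSpace.induced (fun u => UniformOnFun.ofFun 𝔖 (⇑u))
    (UniformOnFun.topologicalSpace E F 𝔖)

/-- The operator norm topology on each space of operators. -/
def normTopology (E F : Type u)
    [NormedAddCommGroup E] [NormedSpace 𝕜 E] [CompleteSpace E]
    [NormedAddCommGroup F] [NormedSpace 𝕜 F] [CompleteSpace F] :
    TopologicalSpace (E →L[𝕜] F) := inferInstance

/-- The topology of pointwise convergence (uniform convergence on finite sets; the strong
operator topology). -/
def ptwiseTopology (E F : Type u)
    [NormedAddCommGroup E] [NormedSpace 𝕜 E] [CompleteSpace E]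
    [NormedAddCommGroup F] [NormedSpace 𝕜 F] [CompleteSpace F] :
    TopologicalSpace (E →L[𝕜] F) := uniformOnTop 𝕜 E F {s : Set E | s.Finite}

/-- The compact-open topology: uniform convergence on compact sets. -/
def compactOpenTopology (E F : Type u)
    [NormedAddCommGroup E] [NormedSpace 𝕜 E] [CompleteSpace E]
    [NormedAddCommGroup F] [NormedSpace 𝕜 F] [CompleteSpace F] :
    TopologicalSpace (E →L[𝕜] F) := uniformOnTop 𝕜 E F {K : Set E | IsCompact K}

/-- An assignment of a family of subsets to each Banach space. -/
abbrev SetFamilyAssignment (𝕜 : Type u) [RCLike 𝕜] : Type (u + 1) :=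
  ∀ (E : Type u) [NormedAddCommGroup E] [NormedSpace 𝕜 E] [CompleteSpace E], Set (Set E)

/-- The topology of uniform convergence on the sets of the family `𝒜 E`. -/
def famTopology (𝒜 : SetFamilyAssignment 𝕜) (E F : Type u)
    [NormedAddCommGroup E] [NormedSpace 𝕜 E] [CompleteSpace E]
    [NormedAddCommGroup F] [NormedSpace 𝕜 F] [CompleteSpace F] :
    TopologicalSpace (E →L[𝕜] F) := uniformOnTop 𝕜 E F (𝒜 E)

/-- The class of finite rank bounded operators. -/
def finRankClass (E F : Type u)
    [NormedAddCommGroup E] [NormedSpace 𝕜 E] [CompleteSpace E]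
    [NormedAddCommGroup F] [NormedSpace 𝕜 F] [CompleteSpace F] : Set (E →L[𝕜] F) :=
  {u | IsFiniteRankOp 𝕜 u}

/-- The class of compact operators: those mapping the closed unit ball to a relatively
compact set. -/
def compactClass (E F : Type u)
    [NormedAddCommGroup E] [NormedSpace 𝕜 E] [CompleteSpace E]
    [NormedAddCommGroup F] [NormedSpace 𝕜 F] [CompleteSpace F] : Set (E →L[𝕜] F) :=
  {u | IsCompact (closure (⇑u '' Metric.closedBall 0 1))}

/-- The class of all bounded operators. -/
def boundedClass (E F : Type u)
    [NormedAddCommGroup E] [NormedSpace 𝕜 E] [CompleteSpace E]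
    [NormedAddCommGroup F] [NormedSpace 𝕜 F] [CompleteSpace F] : Set (E →L[𝕜] F) :=
  Set.univ

/-- A witness that `A` is an `I`-bounded subset of `E`: a Banach space `F` and an operator
`u ∈ I(F;E)` with `A ⊆ u(B_F)`. -/
structure IBddWitness (C : BanachOpClass 𝕜) (E : Type u) [NormedAddCommGroup E]
    [NormedSpace 𝕜 E] [CompleteSpace E] (A : Set E) : Type (u + 1) where
  F : Type u
  [iG : NormedAddCommGroup F]
  [iS : NormedSpace 𝕜 F]
  [iC : CompleteSpace F]
  u : F →L[𝕜] E
  hu : u ∈ C F E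
  hA : A ⊆ ⇑u '' Metric.closedBall 0 1

/-- `C_I(E)`: the `I`-bounded subsets of `E`. -/
def IBddSets (C : BanachOpClass 𝕜) (E : Type u) [NormedAddCommGroup E]
    [NormedSpace 𝕜 E] [CompleteSpace E] : Set (Set E) :=
  {A | Nonempty (IBddWitness 𝕜 C E A)}

/-- The topology `τ_{C_I}` of uniform convergence on `I`-bounded sets. -/
def iBddTopology (C : BanachOpClass 𝕜) (E F : Type u)
    [NormedAddCommGroup E] [NormedSpace 𝕜 E] [CompleteSpace E]
    [NormedAddCommGroup F] [NormedSpace 𝕜 F] [CompleteSpace F] :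
    TopologicalSpace (E →L[𝕜] F) := uniformOnTop 𝕜 E F (IBddSets 𝕜 C E)

/-- `L_I`: the class of `I`-bounded operators, i.e. those mapping the closed unit ball
to an `I`-bounded set. -/
def LBddClass (C : BanachOpClass 𝕜) (E F : Type u)
    [NormedAddCommGroup E] [NormedSpace 𝕜 E] [CompleteSpace E]
    [NormedAddCommGroup F] [NormedSpace 𝕜 F] [CompleteSpace F] : Set (E →L[𝕜] F) :=
  {T | ⇑T '' Metric.closedBall 0 1 ∈ IBddSets 𝕜 C F}

/-- A witness that `B` is an `I`-compact subset of `E`. -/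
structure ICptWitness (C : BanachOpClass 𝕜) (E : Type u) [NormedAddCommGroup E]
    [NormedSpace 𝕜 E] [CompleteSpace E] (B : Set E) : Type (u + 1) where
  F : Type u
  [iG : NormedAddCommGroup F]
  [iS : NormedSpace 𝕜 F]
  [iC : CompleteSpace F]
  K : Set F
  hK : IsCompact K
  u : F →L[𝕜] E
  hu : u ∈ C F E
  A : Set E
  hA : A ⊆ ⇑u '' K
  hB : B = closure A

/-- `K_I(E)`: the `I`-compact subsets of `E`. -/
def ICptSets (C : BanachOpClass 𝕜) (E : Type u) [NormedAddCommGroup E]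
    [NormedSpace 𝕜 E] [CompleteSpace E] : Set (Set E) :=
  {B | Nonempty (ICptWitness 𝕜 C E B)}

/-- The topology `τ_{K_I}` of uniform convergence on `I`-compact sets. -/
def iCptTopology (C : BanachOpClass 𝕜) (E F : Type u)
    [NormedAddCommGroup E] [NormedSpace 𝕜 E] [CompleteSpace E]
    [NormedAddCommGroup F] [NormedSpace 𝕜 F] [CompleteSpace F] :
    TopologicalSpace (E →L[𝕜] F) := uniformOnTop 𝕜 E F (ICptSets 𝕜 C E)

/-- The absolutely convex hull of the terms of a sequence: all finite sums `Σ λᵢ • x_{nᵢ}`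
with `Σ ‖λᵢ‖ ≤ 1`. -/
def absConvexHullSeq {E : Type u} [NormedAddCommGroup E] [NormedSpace 𝕜 E]
    (x : ℕ → E) : Set E :=
  {y | ∃ (m : ℕ) (lam : Fin m → 𝕜) (idx : Fin m → ℕ),
    (∑ i, ‖lam i‖) ≤ 1 ∧ y = ∑ i, lam i • x (idx i)}

/-- `BR_q(E)`: the Bourgain–Reinov `q`-compact subsets of `E`. -/
def BRSets (q : ℝ) (E : Type u) [NormedAddCommGroup E] [NormedSpace 𝕜 E]
    [CompleteSpace E] : Set (Set E) :=
  {A | ∃ x : ℕ → E, Summable (fun n => ‖x n‖ ^ q) ∧ A ⊆ closure (absConvexHullSeq 𝕜 x)}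

/-- The topology `τ_{BR_q}` of uniform convergence on Bourgain–Reinov `q`-compact sets. -/
def brTopology (q : ℝ) (E F : Type u)
    [NormedAddCommGroup E] [NormedSpace 𝕜 E] [CompleteSpace E]
    [NormedAddCommGroup F] [NormedSpace 𝕜 F] [CompleteSpace F] :
    TopologicalSpace (E →L[𝕜] F) := uniformOnTop 𝕜 E F (BRSets 𝕜 q E)

/-- The Grothendieck property of an operator ideal. -/
def GrothendieckProperty (C : BanachOpClass 𝕜) : Prop :=
  ∀ (E : Type u) [NormedAddCommGroup E] [NormedSpace 𝕜 E] [CompleteSpace E] (A : Set E),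
    Bornology.IsBounded A →
    (∀ ε : ℝ, 0 < ε → ∃ Aε ∈ IBddSets 𝕜 C E, A ⊆ Aε + Metric.closedBall (0 : E) ε) →
    A ∈ IBddSets 𝕜 C E

/-- A witness that `T` factors as `T = R ∘ S` with `S` in the class `D` and `R` in the
class `C`, through some Banach space `Z`. -/
structure FactorWitness (D C : BanachOpClass 𝕜) (F E : Type u)
    [NormedAddCommGroup F] [NormedSpace 𝕜 F] [CompleteSpace F]
    [NormedAddCommGroup E] [NormedSpace 𝕜 E] [CompleteSpace E]
    (T : F →L[𝕜] E) : Type (u + 1) where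
  Z : Type u
  [iG : NormedAddCommGroup Z]
  [iS : NormedSpace 𝕜 Z]
  [iC : CompleteSpace Z]
  S : F →L[𝕜] Z
  R : Z →L[𝕜] E
  hS : S ∈ D F Z
  hR : R ∈ C Z E
  heq : T = R.comp S

section Aux

variable {𝕜}

/-- An operator norm bound from a bound on the closed unit ball. -/
lemma opNorm_le_of_closedBall_aux {F E : Type u} [NormedAddCommGroup F] [NormedSpace 𝕜 F]
    [NormedAddCommGroup E] [NormedSpace 𝕜 E] (f : F →L[𝕜] E) {C : ℝ} (hC : 0 ≤ C)
    (h : ∀ x ∈ Metric.closedBall (0 : F) 1, ‖f x‖ ≤ C) : ‖f‖ ≤ C := by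
  refine f.opNorm_le_bound hC fun x => ?_
  rcases eq_or_ne x 0 with rfl | hx
  · simp
  · have hxn : (0 : ℝ) < ‖x‖ := norm_pos_iff.mpr hx
    set c : 𝕜 := (RCLike.ofReal ‖x‖ : 𝕜)⁻¹ with hc
    have hcn : ‖c‖ = ‖x‖⁻¹ := by
      rw [hc, norm_inv, RCLike.norm_ofReal, abs_of_pos hxn]
    have hmem : c • x ∈ Metric.closedBall (0 : F) 1 := by
      rw [Metric.mem_closedBall, dist_zero_right, norm_smul, hcn]
      rw [inv_mul_cancel₀ hxn.ne']
    have h2 : ‖f (c • x)‖ ≤ C := h _ hmem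
    rw [map_smul, norm_smul, hcn] at h2
    have := mul_le_mul_of_nonneg_left h2 hxn.le
    calc ‖f x‖ = ‖x‖ * (‖x‖⁻¹ * ‖f x‖) := by field_simp
    _ ≤ ‖x‖ * C := this
    _ = C * ‖x‖ := mul_comm _ _

/-- Membership in the closure w.r.t. the topology of uniform convergence on a nonempty
directed family of sets. -/
lemma mem_closure_uniformOnTop_iff {E F : Type u}
    [NormedAddCommGroup E] [NormedSpace 𝕜 E] [CompleteSpace E]
    [NormedAddCommGroup F] [NormedSpace 𝕜 F] [CompleteSpace F]
    {𝔖 : Set (Set E)} (hne : 𝔖.Nonempty) (hdir : DirectedOn (· ⊆ ·) 𝔖)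
    {s : Set (E →L[𝕜] F)} {T : E →L[𝕜] F} :
    T ∈ @closure _ (uniformOnTop 𝕜 E F 𝔖) s ↔
      ∀ A ∈ 𝔖, ∀ ε : ℝ, 0 < ε → ∃ u ∈ s, ∀ x ∈ A, dist (u x) (T x) < ε := by
  letI : TopologicalSpace (E →L[𝕜] F) := uniformOnTop 𝕜 E F 𝔖
  have h1 : (𝓝 T) = Filter.comap (fun u : E →L[𝕜] F => UniformOnFun.ofFun 𝔖 ⇑u)
      (𝓝 (UniformOnFun.ofFun 𝔖 ⇑T)) := nhds_induced _ _
  have hb : (𝓝 T).HasBasis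
      (fun Aε : Set E × ℝ => Aε.1 ∈ 𝔖 ∧ 0 < Aε.2)
      (fun Aε => {u : E →L[𝕜] F | ∀ x ∈ Aε.1, dist (u x) (T x) < Aε.2}) := by
    rw [h1]
    have := (UniformOnFun.hasBasis_nhds_of_basis E F 𝔖 (UniformOnFun.ofFun 𝔖 ⇑T) hne hdir
      Metric.uniformity_basis_dist).comap (fun u : E →L[𝕜] F => UniformOnFun.ofFun 𝔖 ⇑u)
    refine this.congr (fun _ => Iff.rfl) ?_
    rintro ⟨A, ε⟩ ⟨hA, hε⟩
    ext u
    simp [UniformOnFun.gen]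
  rw [mem_closure_iff_nhds_basis hb]
  constructor
  · intro h A hA ε hε
    obtain ⟨u, hu, hu'⟩ := h (A, ε) ⟨hA, hε⟩
    exact ⟨u, hu, hu'⟩
  · rintro h ⟨A, ε⟩ ⟨hA, hε⟩
    obtain ⟨u, hu, hu'⟩ := h A hA ε hε
    exact ⟨u, hu, hu'⟩

end Aux

section Aux2

variable {𝕜}

lemma zero_mem_opIdeal {C : BanachOpClass 𝕜} (hC : IsOperatorIdeal 𝕜 C)
    (E F : Type u) [NormedAddCommGroup E] [NormedSpace 𝕜 E] [CompleteSpace E]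
    [NormedAddCommGroup F] [NormedSpace 𝕜 F] [CompleteSpace F] :
    (0 : E →L[𝕜] F) ∈ C E F := by
  apply hC.finiteRank_mem
  unfold IsFiniteRankOp
  have : ((0 : E →L[𝕜] F) : E →ₗ[𝕜] F) = 0 := rfl
  rw [this, LinearMap.range_zero]
  infer_instance

lemma iBddSets_nonempty {C : BanachOpClass 𝕜} (hC : IsOperatorIdeal 𝕜 C)
    (E : Type u) [NormedAddCommGroup E] [NormedSpace 𝕜 E] [CompleteSpace E] :
    (IBddSets 𝕜 C E).Nonempty := by
  refine ⟨∅, ⟨⟨E, 0, zero_mem_opIdeal hC E E, by simp⟩⟩⟩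

/-- Post-composition lemma: if `v ∈ C F G` and `w : G →L H` then `w ∘ v ∈ C F H`. -/
lemma comp_left_mem_opIdeal {C : BanachOpClass 𝕜} (hC : IsOperatorIdeal 𝕜 C)
    {F G H : Type u}
    [NormedAddCommGroup F] [NormedSpace 𝕜 F] [CompleteSpace F]
    [NormedAddCommGroup G] [NormedSpace 𝕜 G] [CompleteSpace G]
    [NormedAddCommGroup H] [NormedSpace 𝕜 H] [CompleteSpace H]
    {v : F →L[𝕜] G} (hv : v ∈ C F G) (w : G →L[𝕜] H) : w.comp v ∈ C F H := by
  have := hC.comp_mem F F G H (ContinuousLinearMap.id 𝕜 F) v w hv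
  simpa using this

/-- Pre-composition lemma: if `v ∈ C G H` and `u : F →L G` then `v ∘ u ∈ C F H`. -/
lemma comp_right_mem_opIdeal {C : BanachOpClass 𝕜} (hC : IsOperatorIdeal 𝕜 C)
    {F G H : Type u}
    [NormedAddCommGroup F] [NormedSpace 𝕜 F] [CompleteSpace F]
    [NormedAddCommGroup G] [NormedSpace 𝕜 G] [CompleteSpace G]
    [NormedAddCommGroup H] [NormedSpace 𝕜 H] [CompleteSpace H]
    {v : G →L[𝕜] H} (hv : v ∈ C G H) (u : F →L[𝕜] G) : v.comp u ∈ C F H := by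
  have := hC.comp_mem F G H H u v (ContinuousLinearMap.id 𝕜 H) hv
  simpa using this

lemma iBddSets_directedOn {C : BanachOpClass 𝕜} (hC : IsOperatorIdeal 𝕜 C)
    (E : Type u) [NormedAddCommGroup E] [NormedSpace 𝕜 E] [CompleteSpace E] :
    DirectedOn (· ⊆ ·) (IBddSets 𝕜 C E) := by
  rintro A ⟨⟨F, u, hu, hA⟩⟩ B ⟨⟨G, v, hv, hB⟩⟩
  refine ⟨A ∪ B, ⟨⟨F × G,
    u.comp (ContinuousLinearMap.fst 𝕜 F G) + v.comp (ContinuousLinearMap.snd 𝕜 F G),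
    hC.add_mem _ _ _ _
      (comp_right_mem_opIdeal hC hu (ContinuousLinearMap.fst 𝕜 F G))
      (comp_right_mem_opIdeal hC hv (ContinuousLinearMap.snd 𝕜 F G)), ?_⟩⟩,
    Set.subset_union_left, Set.subset_union_right⟩
  rintro x (hx | hx)
  · obtain ⟨f, hf, rfl⟩ := hA hx
    refine ⟨(f, 0), ?_, by simp⟩
    rw [Metric.mem_closedBall, dist_zero_right] at hf ⊢
    rw [Prod.norm_def]
    simpa using hf
  · obtain ⟨g, hg, rfl⟩ := hB hx
    refine ⟨(0, g), ?_, by simp⟩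
    rw [Metric.mem_closedBall, dist_zero_right] at hg ⊢
    rw [Prod.norm_def]
    simpa using hg

lemma iBddSets_norm_bound {C : BanachOpClass 𝕜}
    {E : Type u} [NormedAddCommGroup E] [NormedSpace 𝕜 E] [CompleteSpace E]
    {A : Set E} (hA : A ∈ IBddSets 𝕜 C E) :
    ∃ M : ℝ, 0 ≤ M ∧ ∀ x ∈ A, ‖x‖ ≤ M := by
  obtain ⟨⟨F, u, hu, hA⟩⟩ := hA
  refine ⟨‖u‖, norm_nonneg _, fun x hx => ?_⟩
  obtain ⟨f, hf, rfl⟩ := hA hx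
  rw [Metric.mem_closedBall, dist_zero_right] at hf
  calc ‖u f‖ ≤ ‖u‖ * ‖f‖ := u.le_opNorm f
  _ ≤ ‖u‖ * 1 := by gcongr
  _ = ‖u‖ := mul_one _

end Aux2

/-- the implications (a) ⟹ (e) ⟹ (d) ⟹ (c) ⟺ (b) among approximation
properties with respect to the topologies of uniform convergence on J-bounded sets. -/
theorem statement8 (I₁ I₂ I₃ J₁ J₂ : BanachOpClass 𝕜)
    (hI₁ : IsOperatorIdeal 𝕜 I₁) (hI₂ : IsOperatorIdeal 𝕜 I₂) (hI₃ : IsOperatorIdeal 𝕜 I₃)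
    (hJ₁ : IsOperatorIdeal 𝕜 J₁) (hJ₂ : IsOperatorIdeal 𝕜 J₂)
    (hJ21 : ∀ (E F : Type u) [NormedAddCommGroup E] [NormedSpace 𝕜 E] [CompleteSpace E] [NormedAddCommGroup F] [NormedSpace 𝕜 F] [CompleteSpace F], J₂ E F ⊆ J₁ E F)
    (hI13 : ∀ (E F : Type u) [NormedAddCommGroup E] [NormedSpace 𝕜 E] [CompleteSpace E] [NormedAddCommGroup F] [NormedSpace 𝕜 F] [CompleteSpace F], I₁ E F ⊆ I₃ E F)
    (hfact : ∀ (F G : Type u) [NormedAddCommGroup F] [NormedSpace 𝕜 F] [CompleteSpace F] [NormedAddCommGroup G] [NormedSpace 𝕜 G] [CompleteSpace G], ∀ T ∈ I₁ F G,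
      Nonempty (FactorWitness 𝕜 (LBddClass 𝕜 J₂) I₁ F G T))
    (E : Type u) [NormedAddCommGroup E] [NormedSpace 𝕜 E] [CompleteSpace E] :
    -- (a) ⟹ (e)
    ((ContinuousLinearMap.id 𝕜 E ∈ @closure _ (iBddTopology 𝕜 J₁ E E) (I₂ E E)) →
      HasAP 𝕜 (boundedClass 𝕜) I₂ (iBddTopology 𝕜 J₂) E) ∧
    -- (e) ⟹ (d)
    (HasAP 𝕜 (boundedClass 𝕜) I₂ (iBddTopology 𝕜 J₂) E →
      HasAP 𝕜 I₃ I₂ (iBddTopology 𝕜 J₂) E) ∧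
    -- (d) ⟹ (c)
    (HasAP 𝕜 I₃ I₂ (iBddTopology 𝕜 J₂) E → HasAP 𝕜 I₁ I₂ (iBddTopology 𝕜 J₂) E) ∧
    -- (c) ⟺ (b)
    (HasAP 𝕜 I₁ I₂ (iBddTopology 𝕜 J₂) E ↔ HasAP 𝕜 I₁ I₂ (normTopology 𝕜) E) := by

    -- (c) ⟺ (b) will use this little helper inline.
  have hJ₂ne := fun (F : Type u) [NormedAddCommGroup F] [NormedSpace 𝕜 F] [CompleteSpace F] =>
    iBddSets_nonempty (C := J₂) hJ₂ F
  have hJ₂dir := fun (F : Type u) [NormedAddCommGroup F] [NormedSpace 𝕜 F] [CompleteSpace F] =>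
    iBddSets_directedOn (C := J₂) hJ₂ F
  refine ⟨?_, ?_, ?_, ?_, ?_⟩
  -- (a) ⟹ (e)
  · intro ha F _ _ _ T _
    rw [iBddTopology, mem_closure_uniformOnTop_iff (hJ₂ne F) (hJ₂dir F)]
    intro A hA ε hε
    obtain ⟨⟨G, w, hw, hAw⟩⟩ := hA
    have hB : ⇑T '' A ∈ IBddSets 𝕜 J₁ E := by
      refine ⟨⟨G, T.comp w, hJ21 G E (comp_left_mem_opIdeal hJ₂ hw T), ?_⟩⟩
      rintro y ⟨x, hx, rfl⟩
      obtain ⟨g, hg, rfl⟩ := hAw hx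
      exact ⟨g, hg, rfl⟩
    have ha' := (mem_closure_uniformOnTop_iff
      (iBddSets_nonempty (C := J₁) hJ₁ E) (iBddSets_directedOn (C := J₁) hJ₁ E)).mp ha
    obtain ⟨v, hv, hvc⟩ := ha' (⇑T '' A) hB ε hε
    refine ⟨v.comp T, comp_right_mem_opIdeal hI₂ hv T, fun x hx => ?_⟩
    have := hvc (T x) ⟨x, hx, rfl⟩
    simpa using this
  -- (e) ⟹ (d)
  · intro he F _ _ _ T hT
    exact he F (Set.mem_univ T)
  -- (d) ⟹ (c)
  · intro hd F _ _ _ T hT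
    exact hd F (hI13 F E hT)
  -- (c) ⟹ (b)
  · intro hc F _ _ _ T hT
    show T ∈ closure (I₂ F E)
    rw [Metric.mem_closure_iff]
    intro ε hε
    obtain ⟨wit⟩ := hfact F E T hT
    letI := wit.iG; letI := wit.iS; letI := wit.iC
    obtain ⟨Z, S, R, hS, hR, heq⟩ := wit
    have hRc := (mem_closure_uniformOnTop_iff (hJ₂ne Z) (hJ₂dir Z)).mp (hc Z hR)
    obtain ⟨u, hu, hclose⟩ := hRc (⇑S '' Metric.closedBall 0 1) hS (ε / 2) (by positivity)
    refine ⟨u.comp S, comp_right_mem_opIdeal hI₂ hu S, ?_⟩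
    have hb : ‖T - u.comp S‖ ≤ ε / 2 := by
      refine opNorm_le_of_closedBall_aux _ (by positivity) fun x hx => ?_
      have h1 := hclose (S x) ⟨x, hx, rfl⟩
      rw [dist_eq_norm] at h1
      have : (T - u.comp S) x = R (S x) - u (S x) := by
        simp [heq]
      rw [this, ← norm_sub_rev]
      exact h1.le
    calc dist T (u.comp S) = ‖T - u.comp S‖ := dist_eq_norm _ _
    _ ≤ ε / 2 := hb
    _ < ε := by linarith
  -- (b) ⟹ (c)
  · intro hb F _ _ _ T hT
    rw [iBddTopology, mem_closure_uniformOnTop_iff (hJ₂ne F) (hJ₂dir F)]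
    intro A hA ε hε
    obtain ⟨M, hM0, hM⟩ := iBddSets_norm_bound hA
    have hT' : T ∈ closure (I₂ F E) := hb F hT
    rw [Metric.mem_closure_iff] at hT'
    obtain ⟨u, hu, hdist⟩ := hT' (ε / (M + 1)) (by positivity)
    refine ⟨u, hu, fun x hx => ?_⟩
    rw [dist_eq_norm] at hdist ⊢
    have h1 : u x - T x = (u - T) x := by simp
    calc ‖u x - T x‖ = ‖(u - T) x‖ := by rw [h1]
    _ ≤ ‖u - T‖ * ‖x‖ := (u - T).le_opNorm x
    _ ≤ ‖u - T‖ * (M + 1) := by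
        have := hM x hx
        gcongr; linarith
    _ < (ε / (M + 1)) * (M + 1) := by
        have : ‖u - T‖ < ε / (M + 1) := by rwa [norm_sub_rev]
        have hM1 : (0:ℝ) < M + 1 := by linarith
        exact mul_lt_mul_of_pos_right this hM1
    _ = ε := by field_simp
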